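/- arXiv:2103.00963 — 4 statements merged into one kernel-verified Lean document; each statement's English description precedes it below -/
import Mathlib

section
/- Let V be the complex vector space with basis {ζᵢ, ωᵢ, τᵢ : i ∈ {2,3,4}} and work in the exterior algebra Λ(V). Given arbitrary complex scalars zᵢ, wᵢ, tᵢ for i ∈ {2,3,4}, for i ≠ j define the degree-2 element N_{ij} = (zᵢ−z_j)·(ωᵢ−ω_j)∧(τᵢ−τ_j) − (wᵢ−w_j)·(ζᵢ−ζ_j)∧(τᵢ−τ_j) + (tᵢ−t_j)·(ζᵢ−ζ_j)∧(ωᵢ−ω_j). Then N₃₂ ∧ N₂₄ ∧ N₄₃ = 0 in Λ(V). -/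
open ExteriorAlgebra

/-- The underlying vector space: basis indexed by pairs `(a, i)` where `a : Fin 3`
chooses among the three families `ζ, ω, τ` and `i : Fin 3` labels the vertices
`2, 3, 4` (so `i = 0 ↦ vertex 2`, `i = 1 ↦ vertex 3`, `i = 2 ↦ vertex 4`). -/
abbrev PropVS : Type := Fin 3 → Fin 3 → ℂ

/-- The basis vector `ζᵢ` (playing the role of `dz̄ᵢ`). -/
noncomputable def ζ (i : Fin 3) : ExteriorAlgebra ℂ PropVS :=
  ExteriorAlgebra.ι ℂ (Pi.single 0 (Pi.single i 1))

/-- The basis vector `ωᵢ` (playing the role of `dw̄ᵢ`). -/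
noncomputable def ω (i : Fin 3) : ExteriorAlgebra ℂ PropVS :=
  ExteriorAlgebra.ι ℂ (Pi.single 1 (Pi.single i 1))

/-- The basis vector `τᵢ` (playing the role of `dtᵢ`). -/
noncomputable def τ (i : Fin 3) : ExteriorAlgebra ℂ PropVS :=
  ExteriorAlgebra.ι ℂ (Pi.single 2 (Pi.single i 1))

/-- The numerator 2-form of the 5d Chern–Simons propagator between vertices `i` and `j`:
`N_{ij} = (zᵢ−z_j)·(ωᵢ−ω_j)∧(τᵢ−τ_j) − (wᵢ−w_j)·(ζᵢ−ζ_j)∧(τᵢ−τ_j)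
          + (tᵢ−t_j)·(ζᵢ−ζ_j)∧(ωᵢ−ω_j)`. -/
noncomputable def propNum (z w t : Fin 3 → ℂ) (i j : Fin 3) : ExteriorAlgebra ℂ PropVS :=
  (z i - z j) • ((ω i - ω j) * (τ i - τ j))
    - (w i - w j) • ((ζ i - ζ j) * (τ i - τ j))
    + (t i - t j) • ((ζ i - ζ j) * (ω i - ω j))

lemma mul3_swap {A : Type*} [Ring A] {x y : A} (h : y * x = -(x * y)) (u : A) :
    y * (x * u) = -(x * (y * u)) := by rw [← mul_assoc, h, neg_mul, mul_assoc]

lemma mul3_sq {A : Type*} [Ring A] {x : A} (h : x * x = 0) (u : A) : x * (x * u) = 0 := by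
  rw [← mul_assoc, h, zero_mul]

lemma key {A : Type*} [Ring A] [Algebra ℂ A]
    (a1 a2 b1 b2 c1 c2 : A)
    (h1 : a1*a1 = 0) (h2 : a2*a2 = 0) (h3 : b1*b1 = 0) (h4 : b2*b2 = 0)
    (h5 : c1*c1 = 0) (h6 : c2*c2 = 0)
    (s21 : a2*a1 = -(a1*a2)) (s31 : b1*a1 = -(a1*b1)) (s41 : b2*a1 = -(a1*b2))
    (s51 : c1*a1 = -(a1*c1)) (s61 : c2*a1 = -(a1*c2))
    (s32 : b1*a2 = -(a2*b1)) (s42 : b2*a2 = -(a2*b2)) (s52 : c1*a2 = -(a2*c1))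
    (s62 : c2*a2 = -(a2*c2))
    (s43 : b2*b1 = -(b1*b2)) (s53 : c1*b1 = -(b1*c1)) (s63 : c2*b1 = -(b1*c2))
    (s54 : c1*b2 = -(b2*c1)) (s64 : c2*b2 = -(b2*c2))
    (s65 : c2*c1 = -(c1*c2))
    (z1 z2 w1 w2 t1 t2 : ℂ) :
    (z1 • (b1*c1) - w1 • (a1*c1) + t1 • (a1*b1)) *
      (z2 • (b2*c2) - w2 • (a2*c2) + t2 • (a2*b2)) *
      ((-(z1+z2)) • (-(b1+b2) * -(c1+c2)) - (-(w1+w2)) • (-(a1+a2) * -(c1+c2))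
        + (-(t1+t2)) • (-(a1+a2) * -(b1+b2))) = 0 := by
  simp only [mul_add, add_mul, mul_sub, sub_mul, mul_neg, neg_mul, neg_neg,
    smul_mul_assoc, mul_smul_comm, mul_assoc, smul_smul,
    h1, h2, h3, h4, h5, h6, s21, s31, s41, s51, s61, s32, s42, s52, s62,
    s43, s53, s63, s54, s64, s65,
    mul3_swap s21, mul3_swap s31, mul3_swap s41, mul3_swap s51, mul3_swap s61,
    mul3_swap s32, mul3_swap s42, mul3_swap s52, mul3_swap s62,
    mul3_swap s43, mul3_swap s53, mul3_swap s63, mul3_swap s54, mul3_swap s64,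
    mul3_swap s65,
    mul3_sq h1, mul3_sq h2, mul3_sq h3, mul3_sq h4, mul3_sq h5, mul3_sq h6,
    smul_zero, mul_zero, zero_mul, smul_neg, neg_smul,
    add_zero, zero_add, sub_zero, zero_sub, neg_zero]
  module

/-- Each family's differences are `ι` of a single vector. -/
lemma zeta_diff (i j : Fin 3) :
    ζ i - ζ j = ι ℂ (Pi.single 0 (Pi.single i 1) - Pi.single 0 (Pi.single j 1) : PropVS) := by
  rw [map_sub]; rfl

lemma omega_diff (i j : Fin 3) :
    ω i - ω j = ι ℂ (Pi.single 1 (Pi.single i 1) - Pi.single 1 (Pi.single j 1) : PropVS) := by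
  rw [map_sub]; rfl

lemma tau_diff (i j : Fin 3) :
    τ i - τ j = ι ℂ (Pi.single 2 (Pi.single i 1) - Pi.single 2 (Pi.single j 1) : PropVS) := by
  rw [map_sub]; rfl

lemma gen_sq (v : PropVS) : ι ℂ v * ι ℂ v = 0 := ι_sq_zero v

lemma gen_swap (v w : PropVS) : ι ℂ w * ι ℂ v = -(ι ℂ v * ι ℂ w) := by
  rw [eq_neg_iff_add_eq_zero]
  exact ι_add_mul_swap w v

/-- `N₃₂ ∧ N₂₄ ∧ N₄₃ = 0`: no higher-loop correction to the internal 3-point vertex.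
(Vertices `2, 3, 4` correspond to indices `0, 1, 2 : Fin 3`.) -/
theorem propNum_triangle_vanishes (z w t : Fin 3 → ℂ) :
    propNum z w t 1 0 * propNum z w t 0 2 * propNum z w t 2 1 = 0 := by
  have eζ : ζ 2 - ζ 1 = -((ζ 1 - ζ 0) + (ζ 0 - ζ 2)) := by abel
  have eω : ω 2 - ω 1 = -((ω 1 - ω 0) + (ω 0 - ω 2)) := by abel
  have eτ : τ 2 - τ 1 = -((τ 1 - τ 0) + (τ 0 - τ 2)) := by abel
  have fz : z 2 - z 1 = -((z 1 - z 0) + (z 0 - z 2)) := by ring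
  have fw : w 2 - w 1 = -((w 1 - w 0) + (w 0 - w 2)) := by ring
  have ft : t 2 - t 1 = -((t 1 - t 0) + (t 0 - t 2)) := by ring
  simp only [propNum, eζ, eω, eτ, fz, fw, ft, zeta_diff, omega_diff, tau_diff]
  exact key _ _ _ _ _ _ (gen_sq _) (gen_sq _) (gen_sq _) (gen_sq _) (gen_sq _) (gen_sq _)
    (gen_swap _ _) (gen_swap _ _) (gen_swap _ _) (gen_swap _ _) (gen_swap _ _)
    (gen_swap _ _) (gen_swap _ _) (gen_swap _ _) (gen_swap _ _)
    (gen_swap _ _) (gen_swap _ _) (gen_swap _ _)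
    (gen_swap _ _) (gen_swap _ _) (gen_swap _ _) _ _ _ _ _ _
end

section
/- For natural numbers m and n, the function x ↦ x^{m−n}·(1−x)^{n−m+1} (with integer exponents m−n and n−m+1 in ℤ, i.e. zpow) is integrable on the open interval (0,1) if and only if m = n or m = n+1; and in each of these two cases ∫_0^1 x^{m−n}(1−x)^{n−m+1} dx = 1/2. -/
open Real MeasureTheory Set

lemma aux1 (a b : ℤ) (ha : a ≤ -1) :
    ¬ IntegrableOn (fun x : ℝ => x ^ a * (1 - x) ^ b) (Set.Ioo (0:ℝ) 1) := by
  intro h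
  set c : ℝ := min ((2:ℝ)⁻¹ ^ b) 1 with hc
  have hcpos : 0 < c := lt_min (zpow_pos (by norm_num) b) one_pos
  have h2 : IntegrableOn (fun x : ℝ => x ^ a * (1 - x) ^ b) (Ioo (0:ℝ) (1/2)) :=
    h.mono_set (Ioo_subset_Ioo le_rfl (by norm_num))
  have hbd : ∀ x ∈ Ioo (0:ℝ) (1/2), c * x ^ a ≤ x ^ a * (1 - x) ^ b := by
    intro x hx
    have hx0 : (0:ℝ) < x := hx.1
    have hx1 : x < 1/2 := hx.2
    have h1x : (2:ℝ)⁻¹ ≤ 1 - x := by linarith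
    have h1x' : 1 - x ≤ 1 := by linarith
    have hcle : c ≤ (1 - x) ^ b := by
      rcases le_or_gt 0 b with hb | hb
      · obtain ⟨k, rfl⟩ := Int.eq_ofNat_of_zero_le hb
        refine le_trans (min_le_left _ _) ?_
        rw [zpow_natCast, zpow_natCast]
        exact pow_le_pow_left₀ (by norm_num) h1x k
      · refine le_trans (min_le_right _ _) ?_
        exact one_le_zpow_of_nonpos₀ (by linarith) h1x' hb.le
    have := mul_le_mul_of_nonneg_left hcle (zpow_pos hx0 a).le
    linarith [this]
  have h3 : IntegrableOn (fun x : ℝ => x ^ a) (Ioo (0:ℝ) (1/2)) := by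
    have hg : Integrable (fun x : ℝ => c⁻¹ * (x ^ a * (1 - x) ^ b))
        (volume.restrict (Ioo (0:ℝ) (1/2))) := h2.const_mul _
    refine hg.mono ?_ ?_
    · exact (ContinuousOn.aestronglyMeasurable
        (continuousOn_id.zpow₀ a (fun x hx => Or.inl (ne_of_gt hx.1)))
        measurableSet_Ioo)
    · rw [ae_restrict_iff' measurableSet_Ioo]
      filter_upwards with x
      intro hx
      have h1 := hbd x hx
      have hxa : (0:ℝ) < x ^ a := zpow_pos hx.1 a
      rw [Real.norm_eq_abs, Real.norm_eq_abs, abs_of_pos hxa, abs_of_pos]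
      · rw [← mul_le_mul_iff_right₀ hcpos, ← mul_assoc, mul_inv_cancel₀ hcpos.ne', one_mul]
        exact h1
      · have hb0 : (0:ℝ) < (1 - x) ^ b := zpow_pos (by linarith [hx.2] : (0:ℝ) < 1 - x) b
        positivity
  have h4 : IntegrableOn (fun x : ℝ => x ^ (a:ℝ)) (Ioo (0:ℝ) (1/2)) := by
    refine h3.congr_fun (fun x hx => ?_) measurableSet_Ioo
    exact (Real.rpow_intCast x a).symm
  rw [intervalIntegral.integrableOn_Ioo_rpow_iff (by norm_num)] at h4
  have : (a:ℝ) ≤ -1 := by exact_mod_cast ha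
  linarith

lemma aux2 (a b : ℤ) (hb : b ≤ -1) :
    ¬ IntegrableOn (fun x : ℝ => x ^ a * (1 - x) ^ b) (Set.Ioo (0:ℝ) 1) := by
  intro h
  apply aux1 b a hb
  rw [← intervalIntegrable_iff_integrableOn_Ioo_of_le (by norm_num)] at h ⊢
  have key := (h.comp_sub_left 1).symm
  simp only [sub_zero, sub_self] at key
  have heq : (fun x:ℝ => x ^ b * (1 - x) ^ a)
      = fun x:ℝ => (1 - x) ^ a * (1 - (1 - x)) ^ b := by
    funext x; rw [sub_sub_cancel]; ring
  rw [heq]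
  exact key

lemma int_sub : IntegrableOn (fun x : ℝ => 1 - x) (Set.Ioo (0:ℝ) 1) := by
  exact ((continuous_const.sub continuous_id).continuousOn.integrableOn_Icc).mono_set
    Set.Ioo_subset_Icc_self

lemma int_id : IntegrableOn (fun x : ℝ => x) (Set.Ioo (0:ℝ) 1) :=
  (continuous_id.continuousOn.integrableOn_Icc).mono_set Set.Ioo_subset_Icc_self

lemma val_sub : ∫ x in Set.Ioo (0:ℝ) 1, (1 - x) = 1/2 := by
  rw [← integral_Ioc_eq_integral_Ioo, ← intervalIntegral.integral_of_le zero_le_one]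
  simp [intervalIntegral.integral_sub intervalIntegrable_const intervalIntegral.intervalIntegrable_id]
  norm_num [integral_id]

lemma val_id : ∫ x in Set.Ioo (0:ℝ) 1, x = 1/2 := by
  rw [← integral_Ioc_eq_integral_Ioo, ← intervalIntegral.integral_of_le zero_le_one]
  norm_num [integral_id]

/-- The Feynman-parameter integral `∫_0^1 x^{m−n}(1−x)^{n−m+1} dx` (integer exponents):
it is integrable on `(0,1)` iff `m = n` or `m = n+1`, and in each of these cases it
evaluates to `1/2`. -/
theorem feynman_parameter_selection_rule (m n : ℕ) :
    (IntegrableOn (fun x : ℝ => x ^ ((m : ℤ) - n) * (1 - x) ^ ((n : ℤ) - m + 1))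
        (Set.Ioo (0 : ℝ) 1) ↔ (m = n ∨ m = n + 1)) ∧
      ((m = n ∨ m = n + 1) →
        ∫ x in Set.Ioo (0 : ℝ) 1, x ^ ((m : ℤ) - n) * (1 - x) ^ ((n : ℤ) - m + 1) =
          1 / 2) := by
  rcases eq_or_ne m n with rfl | h1
  · have he : (fun x : ℝ => x ^ ((m : ℤ) - m) * (1 - x) ^ ((m : ℤ) - m + 1))
        = fun x : ℝ => 1 - x := by
      funext x; simp
    rw [he]
    exact ⟨iff_of_true int_sub (Or.inl rfl), fun _ => val_sub⟩
  rcases eq_or_ne m (n+1) with rfl | h2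
  · have he : (fun x : ℝ => x ^ (((n+1 : ℕ) : ℤ) - n) * (1 - x) ^ ((n : ℤ) - (n+1 : ℕ) + 1))
        = fun x : ℝ => x := by
      funext x
      have e1 : ((n+1 : ℕ) : ℤ) - n = 1 := by push_cast; ring
      have e2 : (n : ℤ) - ((n+1 : ℕ) : ℤ) + 1 = 0 := by push_cast; ring
      rw [e1, e2]; simp
    rw [he]
    exact ⟨iff_of_true int_id (Or.inr rfl), fun _ => val_id⟩
  · constructor
    · refine iff_of_false ?_ (by tauto)
      rcases lt_or_gt_of_ne h1 with hlt | hgt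
      · exact aux1 _ _ (by omega)
      · exact aux2 _ _ (by omega)
    · rintro (h|h) <;> tauto
end

section
/- For natural numbers m, n with m = n or m = n+1, and every real T > 0, the triple integral 4π² · ∫_0^1 ∫_0^∞ ∫_0^∞ x^{2m+2}·(1−x)^{2n+3} · r_z^5 · r_w · (r_z² + r_w² + x(1−x)T²)^{-(m+n+6)} dr_w dr_z dx equals π² · T^{-(2m+2n+4)} / ((m+n+2)·(m+n+3)·(m+n+4)·(m+n+5)). -/
open Real MeasureTheory Filter Set Topology

private lemma aux_tendsto_base (a : ℝ) : Tendsto (fun r : ℝ => r ^ 2 + a) atTop atTop :=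
  tendsto_atTop_add_const_right _ a (tendsto_pow_atTop two_ne_zero)

private lemma lem_rw (a : ℝ) (ha : 0 < a) (K : ℤ) (hK : 2 ≤ K) :
    ∫ r in Ioi (0:ℝ), r * (r ^ 2 + a) ^ (-K) = a ^ (1 - K) / (2 * ((K : ℝ) - 1)) := by
  have hKne : ((K : ℝ) - 1) ≠ 0 := by
    have : (2:ℝ) ≤ (K:ℝ) := by exact_mod_cast hK
    linarith
  have key := integral_Ioi_of_hasDerivAt_of_nonneg'
    (g := fun r : ℝ => -((r ^ 2 + a) ^ (1 - K) / (2 * ((K : ℝ) - 1))))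
    (g' := fun r : ℝ => r * (r ^ 2 + a) ^ (-K)) (a := 0) (l := 0)
    (fun r hr => by
      have hy : (0:ℝ) < r ^ 2 + a := by positivity
      have hd : HasDerivAt (fun r : ℝ => (r ^ 2 + a) ^ (1 - K))
          (((1 - K : ℤ) : ℝ) * (r ^ 2 + a) ^ (1 - K - 1) * ((2:ℕ) * r ^ 1)) r :=
        by have := (hasDerivAt_zpow (1 - K) _ (Or.inl hy.ne')).comp r
            ((hasDerivAt_pow 2 r).add_const a); exact this
      have := (hd.div_const (2 * ((K : ℝ) - 1))).neg
      refine this.congr_deriv ?_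
      rw [show (1:ℤ) - K - 1 = -K by ring]
      push_cast
      field_simp
      ring)
    (fun r hr => by
      have hr' : (0:ℝ) < r := hr
      have hy : (0:ℝ) < r ^ 2 + a := by positivity
      exact mul_nonneg hr'.le (zpow_pos hy _).le)
    (by
      have h2 := ((tendsto_zpow_atTop_zero (by omega : 1 - K < 0)).comp
        (aux_tendsto_base a)).div_const (2 * ((K : ℝ) - 1))
      simpa using h2.neg)
  rw [key]
  norm_num

private lemma lem_rz (a : ℝ) (ha : 0 < a) (J : ℤ) (hJ : 4 ≤ J) :
    ∫ r in Ioi (0:ℝ), r ^ 5 * (r ^ 2 + a) ^ (-J)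
      = a ^ (3 - J) / (((J : ℝ) - 1) * ((J : ℝ) - 2) * ((J : ℝ) - 3)) := by
  have hJ4 : (4:ℝ) ≤ (J:ℝ) := by exact_mod_cast hJ
  have h1 : ((3:ℝ) - J) ≠ 0 := by linarith
  have h2 : ((2:ℝ) - J) ≠ 0 := by linarith
  have h3 : ((1:ℝ) - J) ≠ 0 := by linarith
  have h4 : ((J:ℝ) - 1) ≠ 0 := by linarith
  have h5 : ((J:ℝ) - 2) ≠ 0 := by linarith
  have h6 : ((J:ℝ) - 3) ≠ 0 := by linarith
  set g : ℝ → ℝ := fun r =>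
    ((r ^ 2 + a) ^ (3 - J) / ((3:ℝ) - J) - 2 * a * (r ^ 2 + a) ^ (2 - J) / ((2:ℝ) - J)
      + a ^ 2 * (r ^ 2 + a) ^ (1 - J) / ((1:ℝ) - J)) / 2 with hg
  have key := integral_Ioi_of_hasDerivAt_of_nonneg'
    (g := g) (g' := fun r : ℝ => r ^ 5 * (r ^ 2 + a) ^ (-J)) (a := 0) (l := 0)
    (fun r hr => by
      have hy : (0:ℝ) < r ^ 2 + a := by positivity
      have hin : HasDerivAt (fun r : ℝ => r ^ 2 + a) ((2:ℕ) * r ^ 1) r :=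
        (hasDerivAt_pow 2 r).add_const a
      have d1 : HasDerivAt (fun r : ℝ => (r ^ 2 + a) ^ (3 - J))
          (((3 - J : ℤ) : ℝ) * (r ^ 2 + a) ^ (3 - J - 1) * ((2:ℕ) * r ^ 1)) r :=
        by have := (hasDerivAt_zpow (3 - J) _ (Or.inl hy.ne')).comp r hin; exact this
      have d2 : HasDerivAt (fun r : ℝ => (r ^ 2 + a) ^ (2 - J))
          (((2 - J : ℤ) : ℝ) * (r ^ 2 + a) ^ (2 - J - 1) * ((2:ℕ) * r ^ 1)) r :=
        by have := (hasDerivAt_zpow (2 - J) _ (Or.inl hy.ne')).comp r hin; exact this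
      have d3 : HasDerivAt (fun r : ℝ => (r ^ 2 + a) ^ (1 - J))
          (((1 - J : ℤ) : ℝ) * (r ^ 2 + a) ^ (1 - J - 1) * ((2:ℕ) * r ^ 1)) r :=
        by have := (hasDerivAt_zpow (1 - J) _ (Or.inl hy.ne')).comp r hin; exact this
      have D := (((d1.div_const ((3:ℝ) - J)).sub
          ((d2.const_mul (2 * a)).div_const ((2:ℝ) - J))).add
          ((d3.const_mul (a ^ 2)).div_const ((1:ℝ) - J))).div_const 2
      show HasDerivAt g (r ^ 5 * (r ^ 2 + a) ^ (-J)) r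
      have key_eq : r ^ 5 * (r ^ 2 + a) ^ (-J) =
          (((3 - J : ℤ) : ℝ) * (r ^ 2 + a) ^ (3 - J - 1) * ((2:ℕ) * r ^ 1) / ((3:ℝ) - J) -
              2 * a * (((2 - J : ℤ) : ℝ) * (r ^ 2 + a) ^ (2 - J - 1) * ((2:ℕ) * r ^ 1)) /
                ((2:ℝ) - J) +
            a ^ 2 * (((1 - J : ℤ) : ℝ) * (r ^ 2 + a) ^ (1 - J - 1) * ((2:ℕ) * r ^ 1)) /
              ((1:ℝ) - J)) / 2 := by
        rw [show (3:ℤ) - J - 1 = 2 + -J by ring, show (2:ℤ) - J - 1 = 1 + -J by ring,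
          show (1:ℤ) - J - 1 = 0 + -J by ring, zpow_add₀ hy.ne', zpow_add₀ hy.ne',
          zpow_add₀ hy.ne', zpow_zero, zpow_one,
          show ((r:ℝ) ^ 2 + a) ^ (2:ℤ) = (r ^ 2 + a) * (r ^ 2 + a) from zpow_two _]
        generalize (r ^ 2 + a) ^ (-J) = w
        push_cast
        field_simp
        ring
      rw [key_eq]
      exact D)
    (fun r hr => by
      have hr' : (0:ℝ) < r := hr
      have hy : (0:ℝ) < r ^ 2 + a := by positivity
      exact mul_nonneg (pow_nonneg hr'.le 5) (zpow_pos hy _).le)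
    (by
      have t1 := (tendsto_zpow_atTop_zero (by omega : 3 - J < 0)).comp (aux_tendsto_base a)
      have t2 := (tendsto_zpow_atTop_zero (by omega : 2 - J < 0)).comp (aux_tendsto_base a)
      have t3 := (tendsto_zpow_atTop_zero (by omega : 1 - J < 0)).comp (aux_tendsto_base a)
      have := (((t1.div_const ((3:ℝ) - J)).sub
          ((t2.const_mul (2 * a)).div_const ((2:ℝ) - J))).add
          ((t3.const_mul (a ^ 2)).div_const ((1:ℝ) - J))).div_const 2
      simpa [hg, Function.comp] using this)
  rw [key, hg]
  have key_eq : (0:ℝ) - ((((0:ℝ) ^ 2 + a) ^ (3 - J) / ((3:ℝ) - J)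
        - 2 * a * ((0:ℝ) ^ 2 + a) ^ (2 - J) / ((2:ℝ) - J)
        + a ^ 2 * ((0:ℝ) ^ 2 + a) ^ (1 - J) / ((1:ℝ) - J)) / 2)
      = a ^ (3 - J) / (((J : ℝ) - 1) * ((J : ℝ) - 2) * ((J : ℝ) - 3)) := by
    rw [show ((0:ℝ) ^ 2 + a) = a by norm_num]
    rw [show (2:ℤ) - J = -1 + (3 - J) by ring, show (1:ℤ) - J = -2 + (3 - J) by ring,
      zpow_add₀ ha.ne', zpow_add₀ ha.ne', zpow_neg, zpow_neg, zpow_one,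
      show (a:ℝ) ^ (2:ℤ) = a * a from zpow_two _]
    generalize a ^ (3 - J) = w
    field_simp
    ring
  exact key_eq

private lemma lem_radial (c : ℝ) (hc : 0 < c) (K : ℤ) (hK : 6 ≤ K) :
    ∫ rz in Ioi (0:ℝ), ∫ rw in Ioi (0:ℝ), rz ^ 5 * rw * (rz ^ 2 + rw ^ 2 + c) ^ (-K)
      = c ^ (4 - K) / (2 * ((K:ℝ) - 1) * ((K:ℝ) - 2) * ((K:ℝ) - 3) * ((K:ℝ) - 4)) := by
  have hK6 : (6:ℝ) ≤ (K:ℝ) := by exact_mod_cast hK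
  have step1 : ∀ rz ∈ Ioi (0:ℝ),
      (∫ rw in Ioi (0:ℝ), rz ^ 5 * rw * (rz ^ 2 + rw ^ 2 + c) ^ (-K))
        = rz ^ 5 * (rz ^ 2 + c) ^ (-(K-1)) * (2 * ((K:ℝ) - 1))⁻¹ := by
    intro rz _
    have h : (fun rw : ℝ => rz ^ 5 * rw * (rz ^ 2 + rw ^ 2 + c) ^ (-K))
        = fun rw : ℝ => rz ^ 5 * (rw * (rw ^ 2 + (rz ^ 2 + c)) ^ (-K)) := by
      funext rw
      rw [show rz ^ 2 + rw ^ 2 + c = rw ^ 2 + (rz ^ 2 + c) by ring]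
      ring
    rw [h, MeasureTheory.integral_const_mul, lem_rw (rz ^ 2 + c) (by positivity) K (by omega)]
    rw [show (1:ℤ) - K = -(K-1) by ring, div_eq_mul_inv]
    ring
  rw [setIntegral_congr_fun measurableSet_Ioi step1, MeasureTheory.integral_mul_const,
    lem_rz c hc (K - 1) (by omega)]
  rw [show (3:ℤ) - (K - 1) = 4 - K by ring]
  push_cast
  have h1 : ((K:ℝ) - 1) ≠ 0 := by linarith
  have h2 : ((K:ℝ) - 1 - 1) ≠ 0 := by linarith
  have h3 : ((K:ℝ) - 1 - 2) ≠ 0 := by linarith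
  have h4 : ((K:ℝ) - 1 - 3) ≠ 0 := by linarith
  generalize c ^ (4 - K) = w
  rw [show (2:ℝ) * ((K:ℝ)-1) * ((K:ℝ)-2) * ((K:ℝ)-3) * ((K:ℝ)-4)
      = (((K:ℝ)-1-1) * ((K:ℝ)-1-2) * ((K:ℝ)-1-3)) * (2*((K:ℝ)-1)) by ring]
  simp only [div_eq_mul_inv, mul_inv]
  ring

private lemma lem_pt (m n : ℕ) (hmn : m = n ∨ m = n + 1) (T x : ℝ) (hT : 0 < T)
    (hx : 0 < x) (hx1 : x < 1) :
    x ^ (2*m+2) * (1-x) ^ (2*n+3) * (x * (1-x) * T^2) ^ (4 - ((m:ℤ) + n + 6))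
      = (if m = n then 1 - x else x) * T ^ (-(2 * (m:ℤ) + 2 * n + 4)) := by
  have hx' : (0:ℝ) < 1 - x := by linarith
  have h1 : (x * (1-x) * T^2) ^ (4 - ((m:ℤ) + n + 6))
      = x ^ (-((m:ℤ)+n+2)) * (1-x) ^ (-((m:ℤ)+n+2)) * T ^ (-(2 * (m:ℤ) + 2 * n + 4)) := by
    rw [show (4 - ((m:ℤ) + n + 6)) = -((m:ℤ)+n+2) by ring, mul_zpow, mul_zpow]
    congr 1
    rw [← zpow_natCast T 2, ← zpow_mul]
    congr 1
    ring
  rw [h1]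
  rcases hmn with rfl | rfl
  · rw [if_pos rfl, show -((m:ℤ)+m+2) = -((2*m+2 : ℕ) : ℤ) by push_cast; ring,
      zpow_neg, zpow_neg, zpow_natCast, zpow_natCast]
    field_simp
    ring
  · rw [if_neg (by omega), show -(((n+1:ℕ):ℤ)+n+2) = -((2*n+3 : ℕ) : ℤ) by push_cast; ring,
      zpow_neg, zpow_neg, zpow_natCast, zpow_natCast]
    field_simp
    ring

open intervalIntegral in
private lemma lem_half (m n : ℕ) : (∫ x in Ioo (0:ℝ) 1, (if m = n then 1 - x else x)) = 1/2 := by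
  rw [← integral_Ioc_eq_integral_Ioo, ← integral_of_le zero_le_one]
  by_cases h : m = n
  · simp only [if_pos h]
    rw [integral_sub intervalIntegrable_const intervalIntegrable_id]
    simp [integral_id]
    norm_num
  · simp only [if_neg h, integral_id]
    norm_num

/-- The full V₂ vertex integral of the 1-loop Feynman diagram for `Δ_{𝒜,𝒜}`:
for `m = n` or `m = n+1` and `T > 0`,
`4π² ∫_0^1 ∫_0^∞ ∫_0^∞ x^{2m+2}(1−x)^{2n+3} r_z^5 r_w (r_z²+r_w²+x(1−x)T²)^{-(m+n+6)}
    dr_w dr_z dx = π² · T^{-(2m+2n+4)} / ((m+n+2)(m+n+3)(m+n+4)(m+n+5))`. -/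
theorem v2_vertex_integral (m n : ℕ) (hmn : m = n ∨ m = n + 1) (T : ℝ) (hT : 0 < T) :
    4 * π ^ 2 *
        ∫ x in Set.Ioo (0 : ℝ) 1, ∫ rz in Set.Ioi (0 : ℝ), ∫ rw in Set.Ioi (0 : ℝ),
          x ^ (2 * m + 2) * (1 - x) ^ (2 * n + 3) * rz ^ 5 * rw *
            (rz ^ 2 + rw ^ 2 + x * (1 - x) * T ^ 2) ^ (-((m : ℤ) + n + 6)) =
      π ^ 2 * T ^ (-(2 * (m : ℤ) + 2 * n + 4)) /
        (((m : ℝ) + n + 2) * ((m : ℝ) + n + 3) * ((m : ℝ) + n + 4) * ((m : ℝ) + n + 5)) := by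
  set K : ℤ := (m:ℤ) + n + 6 with hK
  set Den : ℝ := 2 * ((K:ℝ) - 1) * ((K:ℝ) - 2) * ((K:ℝ) - 3) * ((K:ℝ) - 4) with hDen
  have hstep : ∀ x ∈ Ioo (0:ℝ) 1,
      (∫ rz in Set.Ioi (0 : ℝ), ∫ rw in Set.Ioi (0 : ℝ),
          x ^ (2 * m + 2) * (1 - x) ^ (2 * n + 3) * rz ^ 5 * rw *
            (rz ^ 2 + rw ^ 2 + x * (1 - x) * T ^ 2) ^ (-K))
        = (if m = n then 1 - x else x) * (T ^ (-(2 * (m:ℤ) + 2 * n + 4)) / Den) := by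
    intro x hx
    obtain ⟨hx0, hx1⟩ := hx
    have hc : 0 < x * (1 - x) * T ^ 2 := by
      have : (0:ℝ) < 1 - x := by linarith
      positivity
    have pull : (∫ rz in Set.Ioi (0 : ℝ), ∫ rw in Set.Ioi (0 : ℝ),
          x ^ (2 * m + 2) * (1 - x) ^ (2 * n + 3) * rz ^ 5 * rw *
            (rz ^ 2 + rw ^ 2 + x * (1 - x) * T ^ 2) ^ (-K))
        = x ^ (2 * m + 2) * (1 - x) ^ (2 * n + 3) *
            ∫ rz in Set.Ioi (0 : ℝ), ∫ rw in Set.Ioi (0 : ℝ),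
              rz ^ 5 * rw * (rz ^ 2 + rw ^ 2 + x * (1 - x) * T ^ 2) ^ (-K) := by
      rw [← MeasureTheory.integral_const_mul]
      refine setIntegral_congr_fun measurableSet_Ioi fun rz _ => ?_
      rw [← MeasureTheory.integral_const_mul]
      congr 1
      funext rw_
      ring
    rw [pull, lem_radial _ hc K (by omega), ← hDen]
    rw [show x ^ (2 * m + 2) * (1 - x) ^ (2 * n + 3) *
        ((x * (1 - x) * T ^ 2) ^ (4 - K) / Den)
        = x ^ (2*m+2) * (1-x) ^ (2*n+3) * (x * (1-x) * T^2) ^ (4 - K) / Den by ring]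
    rw [hK, lem_pt m n hmn T x hT hx0 hx1]
    ring
  rw [setIntegral_congr_fun measurableSet_Ioo hstep, MeasureTheory.integral_mul_const,
    lem_half m n]
  have h2 : ((m:ℝ) + n + 2) ≠ 0 := by positivity
  have h3 : ((m:ℝ) + n + 3) ≠ 0 := by positivity
  have h4 : ((m:ℝ) + n + 4) ≠ 0 := by positivity
  have h5 : ((m:ℝ) + n + 5) ≠ 0 := by positivity
  have hDenval : Den = 2 * ((m:ℝ)+n+5) * ((m:ℝ)+n+4) * ((m:ℝ)+n+3) * ((m:ℝ)+n+2) := by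
    rw [hDen, hK]
    push_cast
    ring
  rw [hDenval]
  have hpi : (0:ℝ) < π := Real.pi_pos
  generalize T ^ (-(2 * (m:ℤ) + 2 * n + 4)) = tp
  field_simp
  ring
end

section
/- The triple integral ∫_0^1 ∫_{-∞}^{∞} ∫_0^∞ √(x·(1−x)³) · (1 − 2x) · r^5 · (t² + r² + x(1−x))^{-4} dr dt dx equals π/36. -/
open Real MeasureTheory

section Aux
open Filter Set

lemma rInt (c : ℝ) (hc : 0 < c) :
    ∫ r in Set.Ioi (0:ℝ), r ^ 5 * ((r ^ 2 + c) ^ 4)⁻¹ = 1 / (6 * c) := by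
  set g : ℝ → ℝ := fun r => -(1/2) * ((r^2+c)^1)⁻¹ + (c/2) * ((r^2+c)^2)⁻¹
      - (c^2/6) * ((r^2+c)^3)⁻¹ with hg
  have hb : ∀ r : ℝ, (0:ℝ) < r^2 + c := fun r => by positivity
  have hderiv : ∀ r ∈ Set.Ici (0:ℝ),
      HasDerivAt g (r ^ 5 * ((r ^ 2 + c) ^ 4)⁻¹) r := by
    intro r _
    have h0 : HasDerivAt (fun r : ℝ => r^2 + c) (2*r) r := by
      simpa using (hasDerivAt_pow 2 r).add_const c
    have h1 := ((h0.pow 1).inv (pow_ne_zero 1 (hb r).ne')).const_mul (-(1/2) : ℝ)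
    have h2 := ((h0.pow 2).inv (pow_ne_zero 2 (hb r).ne')).const_mul (c/2 : ℝ)
    have h3 := ((h0.pow 3).inv (pow_ne_zero 3 (hb r).ne')).const_mul (c^2/6 : ℝ)
    have := (h1.add h2).sub h3
    refine this.congr_deriv ?_
    have hne : (r^2+c) ≠ 0 := (hb r).ne'
    simp only [Pi.pow_apply]
    field_simp
    ring
  have hnonneg : ∀ r ∈ Set.Ioi (0:ℝ), 0 ≤ r ^ 5 * ((r ^ 2 + c) ^ 4)⁻¹ := by
    intro r hr
    have : (0:ℝ) < r := hr
    positivity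
  have htop : Tendsto g atTop (nhds 0) := by
    have ht : Tendsto (fun r : ℝ => r^2 + c) atTop atTop :=
      tendsto_atTop_add_const_right _ c (tendsto_pow_atTop two_ne_zero)
    have hk : ∀ k : ℕ, k ≠ 0 → Tendsto (fun r : ℝ => ((r^2+c)^k)⁻¹) atTop (nhds 0) := by
      intro k hk
      exact ((tendsto_pow_atTop hk).comp ht).inv_tendsto_atTop
    have := (((hk 1 one_ne_zero).const_mul (-(1/2):ℝ)).add
        ((hk 2 two_ne_zero).const_mul (c/2))).sub ((hk 3 three_ne_zero).const_mul (c^2/6))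
    simpa [g] using this
  have := integral_Ioi_of_hasDerivAt_of_nonneg' hderiv hnonneg htop
  rw [this]
  have hne : c ≠ 0 := hc.ne'
  simp only [hg]
  field_simp
  ring

lemma tInt (a : ℝ) (ha : 0 < a) : ∫ t : ℝ, (t ^ 2 + a)⁻¹ = π / Real.sqrt a := by
  set s := Real.sqrt a with hs
  have hspos : 0 < s := Real.sqrt_pos.mpr ha
  have hs2 : s ^ 2 = a := Real.sq_sqrt ha.le
  have key : ∀ t : ℝ, (t ^ 2 + a)⁻¹ = a⁻¹ * (1 + (s⁻¹ * t) ^ 2)⁻¹ := by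
    intro t
    have h1 : (0:ℝ) < t^2 + a := by positivity
    field_simp
    rw [← hs2]
    ring
  calc ∫ t : ℝ, (t ^ 2 + a)⁻¹ = ∫ t : ℝ, a⁻¹ * (1 + (s⁻¹ * t) ^ 2)⁻¹ := by
        simp_rw [key]
    _ = a⁻¹ * ∫ t : ℝ, (1 + (s⁻¹ * t) ^ 2)⁻¹ := integral_const_mul _ _
    _ = a⁻¹ * (|s| • ∫ u : ℝ, (1 + u ^ 2)⁻¹) := by
        rw [Measure.integral_comp_inv_mul_left (fun u : ℝ => (1 + u ^ 2)⁻¹) s]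
    _ = π / s := by
        rw [integral_univ_inv_one_add_sq, abs_of_pos hspos, smul_eq_mul, ← hs2]
        field_simp

end Aux

/-- The first V₂ vertex integral of the `Δ_{𝒲∞,𝒲∞}` 1-loop diagram:
`∫_0^1 ∫_{-∞}^{∞} ∫_0^∞ √(x(1−x)³)·(1−2x)·r^5·(t²+r²+x(1−x))^{-4} dr dt dx = π/36`. -/
theorem www_first_v2_integral :
    (∫ x in Set.Ioo (0 : ℝ) 1, ∫ t : ℝ, ∫ r in Set.Ioi (0 : ℝ),
        Real.sqrt (x * (1 - x) ^ 3) * (1 - 2 * x) * r ^ 5 *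
          (t ^ 2 + r ^ 2 + x * (1 - x)) ^ (-(4 : ℤ))) = π / 36 := by
  have hx : ∀ x ∈ Set.Ioo (0:ℝ) 1,
      (∫ t : ℝ, ∫ r in Set.Ioi (0 : ℝ),
        Real.sqrt (x * (1 - x) ^ 3) * (1 - 2 * x) * r ^ 5 *
          (t ^ 2 + r ^ 2 + x * (1 - x)) ^ (-(4 : ℤ)))
      = π / 6 * ((1 - x) * (1 - 2 * x)) := by
    intro x hx
    have hx0 : 0 < x := hx.1
    have hx1 : x < 1 := hx.2
    have h1x : 0 < 1 - x := by linarith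
    have ha : 0 < x * (1 - x) := by positivity
    set K : ℝ := Real.sqrt (x * (1 - x) ^ 3) * (1 - 2 * x) with hK
    have hrw : ∀ t : ℝ,
        (∫ r in Set.Ioi (0 : ℝ), K * r ^ 5 *
          (t ^ 2 + r ^ 2 + x * (1 - x)) ^ (-(4 : ℤ)))
        = K * (1/6) * (t ^ 2 + x * (1 - x))⁻¹ := by
      intro t
      have hc : 0 < t ^ 2 + x * (1 - x) := by positivity
      have := rInt (t ^ 2 + x * (1 - x)) hc
      calc (∫ r in Set.Ioi (0 : ℝ), K * r ^ 5 *
            (t ^ 2 + r ^ 2 + x * (1 - x)) ^ (-(4 : ℤ)))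
          = ∫ r in Set.Ioi (0 : ℝ),
            K * (r ^ 5 * ((r ^ 2 + (t ^ 2 + x * (1 - x))) ^ 4)⁻¹) := by
            refine integral_congr_ae (Filter.Eventually.of_forall fun r => ?_)
            simp only
            rw [show t ^ 2 + r ^ 2 + x * (1 - x) = r ^ 2 + (t ^ 2 + x * (1 - x)) from by
              ring]
            norm_num [zpow_neg, mul_assoc]
        _ = K * (1 / (6 * (t ^ 2 + x * (1 - x)))) := by rw [integral_const_mul, this]
        _ = K * (1/6) * (t ^ 2 + x * (1 - x))⁻¹ := by
            rw [one_div, mul_inv]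
            ring
    simp_rw [hrw]
    rw [integral_const_mul, tInt _ ha]
    have hsq : Real.sqrt (x * (1 - x) ^ 3) = Real.sqrt (x * (1 - x)) * (1 - x) := by
      rw [show x * (1 - x) ^ 3 = (x * (1 - x)) * (1 - x) ^ 2 from by ring,
        Real.sqrt_mul ha.le, Real.sqrt_sq h1x.le]
    have hsne : Real.sqrt (x * (1 - x)) ≠ 0 := (Real.sqrt_pos.mpr ha).ne'
    rw [hK, hsq]
    field_simp
  rw [setIntegral_congr_fun measurableSet_Ioo hx,
    ← integral_Ioc_eq_integral_Ioo, ← intervalIntegral.integral_of_le zero_le_one]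
  have hF : ∀ x : ℝ, HasDerivAt (fun x : ℝ => π/6 * (x - (3/2) * x^2 + (2/3) * x^3))
      (π / 6 * ((1 - x) * (1 - 2 * x))) x := by
    intro x
    have h := (((hasDerivAt_id x).sub ((hasDerivAt_pow 2 x).const_mul (3/2))).add
      ((hasDerivAt_pow 3 x).const_mul (2/3))).const_mul (π/6)
    refine h.congr_deriv ?_
    push_cast
    ring
  rw [intervalIntegral.integral_eq_sub_of_hasDerivAt (fun x _ => hF x)
    (Continuous.intervalIntegrable (by continuity) _ _)]
  ring
end
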